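/- Let K be a T×T real symmetric positive-semidefinite matrix with eigenvalues λ_1 ≥ λ_2 ≥ ⋯ ≥ λ_T ≥ 0 (listed with multiplicity), and let σ > 0. Then for every integer T* with 0 ≤ T* ≤ T, the information gain admits the head–tail decomposition (1/2) · log det(I_T + σ^{-2} K) ≤ (1/2) ∑_{i=1}^{T*} log(1 + σ^{-2} λ_i) + (1/(2σ²)) ∑_{i=T*+1}^{T} λ_i. -/

import Mathlib

open Matrix Finset

/-- Head–tail decomposition of the information gain: if `K` is a real symmetric
positive-semidefinite `T × T` matrix with eigenvalues `λ_1 ≥ ⋯ ≥ λ_T ≥ 0`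
(listed with multiplicity) and `σ > 0`, then for every `0 ≤ T* ≤ T`,
`(1/2) log det(I_T + σ^{-2} K)
  ≤ (1/2) ∑_{i ≤ T*} log(1 + σ^{-2} λ_i) + (1/(2σ²)) ∑_{i > T*} λ_i`. -/
theorem information_gain_head_tail (T : ℕ) (K : Matrix (Fin T) (Fin T) ℝ)
    (hK : K.PosSemidef) (σ : ℝ) (hσ : 0 < σ)
    (lam : Fin T → ℝ) (hmono : Antitone lam) (hnonneg : ∀ i, 0 ≤ lam i)
    (heig : ∃ e : Equiv.Perm (Fin T), ∀ i, lam (e i) = hK.1.eigenvalues i)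
    (Tstar : ℕ) (hTstar : Tstar ≤ T) :
    (1 / 2 : ℝ) * Real.log ((1 + (σ ^ 2)⁻¹ • K).det) ≤
      (1 / 2 : ℝ) * ∑ i ∈ univ.filter (fun i : Fin T => (i : ℕ) < Tstar),
          Real.log (1 + (σ ^ 2)⁻¹ * lam i) +
        (1 / (2 * σ ^ 2)) * ∑ i ∈ univ.filter (fun i : Fin T => Tstar ≤ (i : ℕ)),
          lam i := by
  set c : ℝ := (σ ^ 2)⁻¹ with hc
  have hcpos : 0 < c := by positivity
  set U : Matrix (Fin T) (Fin T) ℝ := (hK.1.eigenvectorUnitary : Matrix (Fin T) (Fin T) ℝ)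
  have hU : U ∈ Matrix.unitaryGroup (Fin T) ℝ := hK.1.eigenvectorUnitary.2
  -- determinant formula
  have hdecomp : (1 + c • K) =
      U * diagonal (fun i => 1 + c * hK.1.eigenvalues i) * star U := by
    have hspec := hK.1.spectral_theorem
    rw [Unitary.conjStarAlgAut_apply] at hspec
    have hdiag : diagonal (fun i => 1 + c * hK.1.eigenvalues i)
        = 1 + c • diagonal (RCLike.ofReal ∘ hK.1.eigenvalues) := by
      rw [← diagonal_one, ← diagonal_smul, ← diagonal_add]
      rfl
    rw [hdiag, mul_add, add_mul, mul_one, (Matrix.mem_unitaryGroup_iff).mp hU,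
      Matrix.mul_smul, Matrix.smul_mul, ← hspec]
  have hdet : (1 + c • K).det = ∏ i, (1 + c * hK.1.eigenvalues i) := by
    rw [hdecomp, det_mul_right_comm]
    rw [show U * star U = 1 from (Matrix.mem_unitaryGroup_iff).mp hU, one_mul, det_diagonal]
  have hev : ∀ i, 0 ≤ hK.1.eigenvalues i := hK.eigenvalues_nonneg
  have hpos : ∀ i, (0:ℝ) < 1 + c * hK.1.eigenvalues i := fun i => by
    have := hev i; nlinarith
  have hlog : Real.log ((1 + c • K).det) = ∑ i, Real.log (1 + c * hK.1.eigenvalues i) := by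
    rw [hdet, Real.log_prod]
    exact fun i _ => (hpos i).ne'
  obtain ⟨e, he⟩ := heig
  have hperm : ∑ i, Real.log (1 + c * hK.1.eigenvalues i)
      = ∑ i, Real.log (1 + c * lam i) := by
    rw [← Equiv.sum_comp e (fun i => Real.log (1 + c * lam i))]
    exact Finset.sum_congr rfl (fun i _ => by rw [he i])
  have hsplit : ∑ i, Real.log (1 + c * lam i)
      = ∑ i ∈ univ.filter (fun i : Fin T => (i : ℕ) < Tstar), Real.log (1 + c * lam i)
        + ∑ i ∈ univ.filter (fun i : Fin T => Tstar ≤ (i : ℕ)), Real.log (1 + c * lam i) := by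
    rw [← Finset.sum_filter_add_sum_filter_not univ (fun i : Fin T => (i : ℕ) < Tstar)]
    congr 1
    apply Finset.sum_congr _ (fun _ _ => rfl)
    congr 1
    ext i
    simp [not_lt]
  have htail : ∑ i ∈ univ.filter (fun i : Fin T => Tstar ≤ (i : ℕ)), Real.log (1 + c * lam i)
      ≤ ∑ i ∈ univ.filter (fun i : Fin T => Tstar ≤ (i : ℕ)), c * lam i := by
    apply Finset.sum_le_sum
    intro i _
    have h := Real.log_le_sub_one_of_pos (x := 1 + c * lam i) (by nlinarith [hnonneg i])
    linarith
  rw [hlog, hperm, hsplit]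
  have h2 : (1 / (2 * σ ^ 2)) * ∑ i ∈ univ.filter (fun i : Fin T => Tstar ≤ (i : ℕ)), lam i
      = (1/2 : ℝ) * ∑ i ∈ univ.filter (fun i : Fin T => Tstar ≤ (i : ℕ)), c * lam i := by
    rw [Finset.mul_sum, Finset.mul_sum]
    apply Finset.sum_congr rfl
    intro i _
    rw [hc]
    ring
  rw [h2, mul_add]
  have := htail
  nlinarith [htail]
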